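/- Let G(V) be an ADMG and let A, Y be disjoint subsets of V. There exists a hedge for (Y, A) in G(V) if and only if some district of the induced subgraph G_{Y*} is not an intrinsic set of G(V). -/

import Mathlib

/-- A conditional acyclic directed mixed graph (CADMG) on vertex type `V`:
a directed edge relation `dir` with no directed cycles, a symmetric irreflexive
bidirected edge relation `bi`, and a set `rnd` of random vertices (the remaining
vertices being fixed), such that no directed edge points into a fixed vertex and
no bidirected edge is incident to a fixed vertex.  An ADMG is the special case
`rnd = Set.univ`. -/
structure CADMG (V : Type*) where
  dir : V → V → Prop
  bi : V → V → Prop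
  rnd : Set V
  acyclic : ∀ v, ¬ Relation.TransGen dir v v
  bi_symm : ∀ a b, bi a b → bi b a
  bi_irrefl : ∀ a, ¬ bi a a
  dir_rnd : ∀ a b, dir a b → b ∈ rnd
  bi_rnd : ∀ a b, bi a b → a ∈ rnd ∧ b ∈ rnd

namespace CADMG

variable {V : Type*}

/-- A random vertex `r` is fixable if there is no other vertex `w` with both a
directed path from `r` to `w` and a bidirected path from `r` to `w`. -/
def Fixable (G : CADMG V) (r : V) : Prop :=
  r ∈ G.rnd ∧
    ¬ ∃ w, w ≠ r ∧ Relation.ReflTransGen G.dir r w ∧ Relation.ReflTransGen G.bi r w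

/-- The fixing operator: move `r` from the random to the fixed vertices and delete
all directed edges into `r` and all bidirected edges incident to `r`. -/
def fix (G : CADMG V) (r : V) : CADMG V where
  dir a b := G.dir a b ∧ b ≠ r
  bi a b := G.bi a b ∧ a ≠ r ∧ b ≠ r
  rnd := G.rnd \ {r}
  acyclic v h := G.acyclic v (Relation.TransGen.mono (fun _ _ hab => hab.1) _ _ h)
  bi_symm a b h := ⟨G.bi_symm a b h.1, h.2.2, h.2.1⟩
  bi_irrefl a h := G.bi_irrefl a h.1
  dir_rnd a b h := ⟨G.dir_rnd a b h.1, h.2⟩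
  bi_rnd a b h := ⟨⟨(G.bi_rnd a b h.1).1, h.2.1⟩, (G.bi_rnd a b h.1).2, h.2.2⟩

/-- A sequence of vertices is a valid fixing sequence if it is empty, or its head is
fixable and its tail is valid in the graph obtained by fixing the head. -/
def Valid (G : CADMG V) : List V → Prop
  | [] => True
  | r :: rest => G.Fixable r ∧ (G.fix r).Valid rest

/-- `φ_σ(G)`: the CADMG obtained by applying the fixing operators along the list `σ`. -/
def fixList (G : CADMG V) : List V → CADMG V
  | [] => G
  | r :: rest => (G.fix r).fixList rest

/-- A set `R` of random vertices is reachable if some ordering of the remaining random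
vertices is a valid fixing sequence. -/
def Reachable (G : CADMG V) (R : Set V) : Prop :=
  ∃ σ : List V, G.Valid σ ∧ ∀ v, v ∈ σ ↔ v ∈ G.rnd \ R

/-- `C` is the reachable closure of `S`: the smallest reachable superset of `S`. -/
def IsReachableClosure (G : CADMG V) (S C : Set V) : Prop :=
  G.Reachable C ∧ S ⊆ C ∧ ∀ T, G.Reachable T → S ⊆ T → C ⊆ T

/-- `D` is bidirected-connected (within `D` itself): `D` is nonempty and any two of its
elements are joined by a bidirected path staying inside `D`. -/
def BiConnected (G : CADMG V) (D : Set V) : Prop :=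
  D.Nonempty ∧ ∀ a ∈ D, ∀ b ∈ D,
    Relation.ReflTransGen (fun x y => G.bi x y ∧ x ∈ D ∧ y ∈ D) a b

/-- An intrinsic set: reachable and bidirected-connected. -/
def Intrinsic (G : CADMG V) (R : Set V) : Prop :=
  G.Reachable R ∧ G.BiConnected R

/-- The induced subgraph on a set `W` of vertices (vertices outside `W` become fixed
and lose all their edges). -/
def induce (G : CADMG V) (W : Set V) : CADMG V where
  dir a b := G.dir a b ∧ a ∈ W ∧ b ∈ W
  bi a b := G.bi a b ∧ a ∈ W ∧ b ∈ W
  rnd := G.rnd ∩ W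
  acyclic v h := G.acyclic v (Relation.TransGen.mono (fun _ _ hab => hab.1) _ _ h)
  bi_symm a b h := ⟨G.bi_symm a b h.1, h.2.2, h.2.1⟩
  bi_irrefl a h := G.bi_irrefl a h.1
  dir_rnd a b h := ⟨G.dir_rnd a b h.1, h.2.2⟩
  bi_rnd a b h := ⟨⟨(G.bi_rnd a b h.1).1, h.2.1⟩, (G.bi_rnd a b h.1).2, h.2.2⟩

/-- The districts of a CADMG: the connected components of its random vertices under
the bidirected edge relation. -/
def District (G : CADMG V) (D : Set V) : Prop :=
  ∃ v ∈ G.rnd, D = {w | Relation.ReflTransGen G.bi v w}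

/-- `Y*`: the set of vertices having a directed path (possibly of length zero) to an
element of `Y` that does not intersect `A`. -/
def Ystar (G : CADMG V) (A Y : Set V) : Set V :=
  {v | ∃ y ∈ Y, Relation.ReflTransGen (fun a b => G.dir a b ∧ a ∉ A ∧ b ∉ A) v y}

/-- `F` is an `R`-rooted C-forest: `R ⊆ F`, `F` is bidirected-connected in the induced
subgraph `G_F`, and there is a subgraph of `G_F` with vertex set `F` and a subset `E` of
its directed edges in which every element of `F` has a directed path (possibly of
length zero) to an element of `R`. -/
def CForest (G : CADMG V) (R F : Set V) : Prop :=
  R ⊆ F ∧ G.BiConnected F ∧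
    ∃ E : V → V → Prop,
      (∀ a b, E a b → G.dir a b ∧ a ∈ F ∧ b ∈ F) ∧
      ∀ f ∈ F, ∃ r ∈ R, Relation.ReflTransGen E f r

/-- A hedge for `(Y, A)` in `G`: a pair `(F, F')` of `R`-rooted C-forests, for some common
root set `R`, with `F ⊊ F'`, `F ∩ A = ∅`, `A ∩ (F' \ F) ≠ ∅`, and every element of `R`
has a directed path to an element of `Y` that does not intersect `A`. -/
def Hedge (G : CADMG V) (Y A : Set V) : Prop :=
  ∃ R F F', G.CForest R F ∧ G.CForest R F' ∧ F ⊂ F' ∧ F ∩ A = ∅ ∧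
    (A ∩ (F' \ F)).Nonempty ∧
    ∀ r ∈ R, ∃ y ∈ Y, Relation.ReflTransGen (fun a b => G.dir a b ∧ a ∉ A ∧ b ∉ A) r y

end CADMG

section Aux

open Relation

namespace CADMG

variable {V : Type*}

lemma last_mem_of_path {r : V → V → Prop} {S : Set V} (hr : ∀ a b, r a b → b ∈ S)
    {v w : V} (h : ReflTransGen r v w) (hv : v ∈ S) : w ∈ S := by
  induction h with
  | refl => exact hv
  | tail _ h2 _ => exact hr _ _ h2

lemma fixList_dir (σ : List V) : ∀ (G : CADMG V) (a b : V),
    (G.fixList σ).dir a b ↔ G.dir a b ∧ b ∉ σ := by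
  induction σ with
  | nil => simp [fixList]
  | cons r rest ih =>
    intro G a b
    rw [show G.fixList (r :: rest) = (G.fix r).fixList rest from rfl, ih]
    show (G.dir a b ∧ b ≠ r) ∧ b ∉ rest ↔ _
    simp only [List.mem_cons]
    tauto

lemma fixList_bi (σ : List V) : ∀ (G : CADMG V) (a b : V),
    (G.fixList σ).bi a b ↔ G.bi a b ∧ a ∉ σ ∧ b ∉ σ := by
  induction σ with
  | nil => simp [fixList]
  | cons r rest ih =>
    intro G a b
    rw [show G.fixList (r :: rest) = (G.fix r).fixList rest from rfl, ih]
    show (G.bi a b ∧ a ≠ r ∧ b ≠ r) ∧ a ∉ rest ∧ b ∉ rest ↔ _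
    simp only [List.mem_cons]
    tauto

lemma valid_append : ∀ (σ τ : List V) (G : CADMG V),
    G.Valid (σ ++ τ) → (G.fixList σ).Valid τ := by
  intro σ
  induction σ with
  | nil => intro τ G h; exact h
  | cons r rest ih => intro τ G h; exact ih τ (G.fix r) h.2

lemma exists_first {α : Type*} (P : α → Prop) :
    ∀ (σ : List α), (∃ w ∈ σ, P w) →
      ∃ σ₁ w σ₂, σ = σ₁ ++ w :: σ₂ ∧ P w ∧ ∀ x ∈ σ₁, ¬ P x := by
  intro σ
  induction σ with
  | nil => rintro ⟨w, hw, -⟩; exact absurd hw List.not_mem_nil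
  | cons a rest ih =>
    intro h
    by_cases hPa : P a
    · exact ⟨[], a, rest, rfl, hPa, by simp⟩
    · obtain ⟨w, hw, hPw⟩ := h
      have hw' : w ∈ rest := by
        rcases List.mem_cons.mp hw with h' | h'
        · exact absurd hPw (h' ▸ hPa)
        · exact h'
      obtain ⟨σ₁, w', σ₂, heq, hP, hall⟩ := ih ⟨w, hw', hPw⟩
      refine ⟨a :: σ₁, w', σ₂, by simp [heq], hP, ?_⟩
      intro x hx
      rcases List.mem_cons.mp hx with h' | h'
      · exact h' ▸ hPa
      · exact hall x h'

lemma rnd_of_dirpath (H : CADMG V) {v w : V} (h : ReflTransGen H.dir v w) (hne : w ≠ v) :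
    w ∈ H.rnd := by
  rcases reflTransGen_iff_eq_or_transGen.mp h with h' | h'
  · exact absurd h' hne
  · induction h' with
    | single h'' => exact H.dir_rnd _ _ h''
    | tail _ h'' _ => exact H.dir_rnd _ _ h''

lemma dirpath_decorate (H : CADMG V) {a b : V} (h : ReflTransGen H.dir a b) (ha : a ∈ H.rnd) :
    ReflTransGen (fun x y => H.dir x y ∧ x ∈ H.rnd ∧ y ∈ H.rnd) a b := by
  revert ha
  induction h using Relation.ReflTransGen.head_induction_on with
  | refl => exact fun _ => .refl
  | head h' _ ih =>
    exact fun ha => .head ⟨h', ha, H.dir_rnd _ _ h'⟩ (ih (H.dir_rnd _ _ h'))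

lemma exists_max_rel [Fintype V] (H : CADMG V) (E : V → V → Prop)
    (hE : ∀ a b, E a b → H.dir a b) (U : Set V) (hU : U.Nonempty) :
    ∃ v ∈ U, ∀ u ∈ U, ReflTransGen E v u → u = v := by
  haveI ht : IsTrans V (fun a b => TransGen E b a) := ⟨fun a b c h1 h2 => h2.trans h1⟩
  haveI hi : IsIrrefl V (fun a b => TransGen E b a) :=
    ⟨fun a h => H.acyclic a (Relation.TransGen.mono hE _ _ h)⟩
  obtain ⟨v, hv, hmin⟩ := (Finite.wellFounded_of_trans_of_irrefl
    (fun a b => TransGen E b a)).has_min U hU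
  refine ⟨v, hv, fun u hu hp => ?_⟩
  rcases reflTransGen_iff_eq_or_transGen.mp hp with h | h
  · exact h
  · exact absurd h (hmin u hu)

/-- Key induction: in any CADMG containing the bidirected-connected set `D` among its
random vertices, either there is a strictly larger bidirected-connected set all of whose
elements are directed-connected to `D` within it, or all vertices outside `D` can be
validly fixed. -/
lemma key [Fintype V] (D : Set V) : ∀ (n : ℕ) (H : CADMG V), H.rnd.ncard ≤ n →
    D ⊆ H.rnd → H.BiConnected D →
    (∃ F', D ⊂ F' ∧ H.BiConnected F' ∧ ∀ f ∈ F', ∃ d ∈ D,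
        ReflTransGen (fun a b => H.dir a b ∧ a ∈ F' ∧ b ∈ F') f d) ∨
    (∃ σ : List V, H.Valid σ ∧ ∀ v, v ∈ σ ↔ v ∈ H.rnd \ D) := by
  intro n
  induction n with
  | zero =>
    intro H hcard hD hbc
    obtain ⟨v0, hv0⟩ := hbc.1
    have hre : H.rnd = ∅ := by
      rw [← Set.ncard_eq_zero (Set.toFinite _)]; omega
    exact absurd (hD hv0) (hre ▸ Set.notMem_empty v0)
  | succ n ih =>
    intro H hcard hD hbc
    classical
    obtain ⟨v0, hv0⟩ := hbc.1
    by_cases hDeq : H.rnd = D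
    · right
      exact ⟨[], trivial, fun v => by simp [hDeq]⟩
    have step : ∀ v, H.Fixable v → v ∉ D →
        (∃ F', D ⊂ F' ∧ H.BiConnected F' ∧ ∀ f ∈ F', ∃ d ∈ D,
            ReflTransGen (fun a b => H.dir a b ∧ a ∈ F' ∧ b ∈ F') f d) ∨
        (∃ σ : List V, H.Valid σ ∧ ∀ v, v ∈ σ ↔ v ∈ H.rnd \ D) := by
      intro v hfix hvD
      have hcard' : (H.fix v).rnd.ncard ≤ n := by
        have hlt : (H.rnd \ {v}).ncard < H.rnd.ncard :=
          Set.ncard_diff_singleton_lt_of_mem hfix.1 (Set.toFinite _)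
        have hre : (H.fix v).rnd = H.rnd \ {v} := rfl
        rw [hre]; omega
      have hD' : D ⊆ (H.fix v).rnd := fun d hd =>
        ⟨hD hd, fun h => hvD ((Set.mem_singleton_iff.mp h) ▸ hd)⟩
      have hbc' : (H.fix v).BiConnected D :=
        ⟨hbc.1, fun a ha b hb => Relation.ReflTransGen.mono (fun x y hxy =>
          ⟨⟨hxy.1, fun h => hvD (h ▸ hxy.2.1), fun h => hvD (h ▸ hxy.2.2)⟩, hxy.2⟩) _ _ (hbc.2 a ha b hb)⟩
      rcases ih (H.fix v) hcard' hD' hbc' with ⟨F', h1, h2, h3⟩ | ⟨σ, h1, h2⟩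
      · left
        refine ⟨F', h1, ⟨h2.1, fun a ha b hb => Relation.ReflTransGen.mono (fun x y hxy =>
          ⟨hxy.1.1, hxy.2⟩) _ _ (h2.2 a ha b hb)⟩, fun f hf => ?_⟩
        obtain ⟨d, hd, hp⟩ := h3 f hf
        exact ⟨d, hd, Relation.ReflTransGen.mono (fun x y hxy => ⟨hxy.1.1, hxy.2⟩) _ _ hp⟩
      · right
        refine ⟨v :: σ, ⟨hfix, h1⟩, fun x => ?_⟩
        constructor
        · intro hx
          rcases List.mem_cons.mp hx with rfl | hx'
          · exact ⟨hfix.1, hvD⟩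
          · have hm := (h2 x).mp hx'
            exact ⟨hm.1.1, hm.2⟩
        · rintro ⟨hxr, hxD⟩
          by_cases hxv : x = v
          · exact List.mem_cons.mpr (Or.inl hxv)
          · exact List.mem_cons.mpr (Or.inr ((h2 x).mpr
              ⟨⟨hxr, fun h => hxv (Set.mem_singleton_iff.mp h)⟩, hxD⟩))
    set An : Set V := {u | u ∈ H.rnd ∧ ∃ d ∈ D, ReflTransGen H.dir u d} with hAndef
    have hDAn : D ⊆ An := fun d hd => ⟨hD hd, d, hd, ReflTransGen.refl⟩
    by_cases hAn : ∀ u ∈ H.rnd, u ∈ An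
    · set Dis : Set V := {w | ReflTransGen H.bi v0 w} with hDisdef
      have hsym : Symmetric H.bi := fun x y h => H.bi_symm x y h
      have hDDis : D ⊆ Dis := fun d hd => Relation.ReflTransGen.mono (fun x y h => h.1) _ _ (hbc.2 v0 hv0 d hd)
      by_cases hDis : ∀ u ∈ H.rnd, u ∈ Dis
      · left
        refine ⟨H.rnd, Set.ssubset_iff_subset_ne.mpr ⟨hD, fun h => hDeq h.symm⟩,
          ⟨⟨v0, hD hv0⟩, fun a ha b hb => ?_⟩, fun f hf => ?_⟩
        · have pa : ReflTransGen H.bi a v0 := (by haveI : Std.Symm H.bi := ⟨fun _ _ h => hsym h⟩; exact Std.Symm.symm _ _ (hDis a ha))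
          have pb : ReflTransGen H.bi v0 b := hDis b hb
          exact Relation.ReflTransGen.mono (fun x y h =>
            ⟨h, (H.bi_rnd x y h).1, (H.bi_rnd x y h).2⟩) _ _ (pa.trans pb)
        · obtain ⟨-, d, hd, hp⟩ := hAn f hf
          exact ⟨d, hd, dirpath_decorate H hp hf⟩
      · push_neg at hDis
        obtain ⟨u1, hu1r, hu1⟩ := hDis
        obtain ⟨v, hv, hmax⟩ := exists_max_rel H H.dir (fun _ _ h => h)
          (H.rnd \ Dis) ⟨u1, hu1r, hu1⟩
        have hvD : v ∉ D := fun h => hv.2 (hDDis h)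
        refine step v ⟨hv.1, ?_⟩ hvD
        rintro ⟨w, hwv, hdp, hbp⟩
        have hwr : w ∈ H.rnd := rnd_of_dirpath H hdp hwv
        have hwDis : w ∉ Dis := fun hw =>
          hv.2 (hw.trans (by haveI : Std.Symm H.bi := ⟨fun _ _ h => hsym h⟩; exact Std.Symm.symm _ _ hbp))
        exact hwv (hmax w ⟨hwr, hwDis⟩ hdp)
    · push_neg at hAn
      obtain ⟨u1, hu1r, hu1⟩ := hAn
      obtain ⟨v, hv, hmax⟩ := exists_max_rel H H.dir (fun _ _ h => h)
        (H.rnd \ An) ⟨u1, hu1r, hu1⟩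
      have hvD : v ∉ D := fun h => hv.2 (hDAn h)
      refine step v ⟨hv.1, ?_⟩ hvD
      rintro ⟨w, hwv, hdp, hbp⟩
      have hwr : w ∈ H.rnd := rnd_of_dirpath H hdp hwv
      have hwAn : w ∉ An := by
        rintro ⟨-, d, hd, hp⟩
        exact hv.2 ⟨hv.1, d, hd, hdp.trans hp⟩
      exact hwv (hmax w ⟨hwr, hwAn⟩ hdp)

end CADMG

end Aux

/-- There exists a hedge for `(Y, A)` in the ADMG `G` iff some district of
the induced subgraph `G_{Y*}` is not an intrinsic set of `G`. -/
theorem hedge_exists_iff_some_district_not_intrinsic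
    {V : Type*} [Fintype V] (G : CADMG V) (hG : G.rnd = Set.univ)
    (A Y : Set V) (hdisj : Disjoint A Y) :
    G.Hedge Y A ↔
      ∃ D, (G.induce (G.Ystar A Y)).District D ∧ ¬ G.Intrinsic D := by
  classical
  open Relation in
  set W := G.Ystar A Y with hWdef
  have hWA : ∀ a ∈ A, a ∉ W := by
    intro a haA haW
    obtain ⟨y, hy, hp⟩ := haW
    rcases hp.cases_head with rfl | ⟨c, hc, -⟩
    · exact Set.disjoint_left.mp hdisj haA hy
    · exact hc.2.1 haA
  constructor
  · rintro ⟨R, F, F', ⟨hRF, hbcF, E, hE, hroot⟩, ⟨hRF', hbcF', E', hE', hroot'⟩,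
      hss, hFA, ⟨a, haA, haF', haF⟩, hRY⟩
    obtain ⟨f0, hf0⟩ := hbcF.1
    have hFnA : ∀ f ∈ F, f ∉ A := by
      intro f hf hfa
      exact absurd (Set.mem_inter hf hfa) (by rw [hFA]; exact Set.notMem_empty f)
    have hFW : F ⊆ W := by
      intro f hf
      obtain ⟨r, hr, hp⟩ := hroot f hf
      obtain ⟨y, hy, hp2⟩ := hRY r hr
      exact ⟨y, hy, (Relation.ReflTransGen.mono (fun x y' h =>
        ⟨(hE x y' h).1, hFnA x (hE x y' h).2.1, hFnA y' (hE x y' h).2.2⟩) _ _ hp).trans hp2⟩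
    have hf0rnd : f0 ∈ (G.induce W).rnd :=
      ⟨by rw [hG]; exact Set.mem_univ f0, hFW hf0⟩
    refine ⟨{w | Relation.ReflTransGen (G.induce W).bi f0 w}, ⟨f0, hf0rnd, rfl⟩, ?_⟩
    set D : Set V := {w | Relation.ReflTransGen (G.induce W).bi f0 w} with hDdef
    have hDW : D ⊆ W := fun w hw =>
      CADMG.last_mem_of_path (r := (G.induce W).bi) (fun x y h => h.2.2) hw (hFW hf0)
    have hFD : F ⊆ D := fun f hf =>
      Relation.ReflTransGen.mono (fun x y h => ⟨h.1, hFW h.2.1, hFW h.2.2⟩) _ _ (hbcF.2 f0 hf0 f hf)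
    rintro ⟨⟨σ, hval, hmem⟩, -⟩
    have haD : a ∉ D := fun h => hWA a haA (hDW h)
    have haσ : a ∈ σ := (hmem a).mpr ⟨by rw [hG]; exact Set.mem_univ a, haD⟩
    obtain ⟨σ₁, w, σ₂, heq, ⟨hwF', hwD⟩, hfirst⟩ :=
      CADMG.exists_first (fun x => x ∈ F' ∧ x ∉ D) σ ⟨a, haσ, haF', haD⟩
    have hσ₁F' : ∀ x ∈ σ₁, x ∉ F' := by
      intro x hx hxF'
      have hxσ : x ∈ σ := heq ▸ List.mem_append.mpr (Or.inl hx)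
      exact hfirst x hx ⟨hxF', ((hmem x).mp hxσ).2⟩
    have hval' : (G.fixList σ₁).Valid (w :: σ₂) :=
      CADMG.valid_append σ₁ (w :: σ₂) G (heq ▸ hval)
    have hfix : (G.fixList σ₁).Fixable w := hval'.1
    obtain ⟨r, hr, hp⟩ := hroot' w hwF'
    have hrD : r ∈ D := hFD (hRF hr)
    refine hfix.2 ⟨r, fun h => hwD (h ▸ hrD), ?_, ?_⟩
    · exact Relation.ReflTransGen.mono (fun x y h => (CADMG.fixList_dir σ₁ G x y).mpr
        ⟨(hE' x y h).1, fun hc => hσ₁F' y hc (hE' x y h).2.2⟩) _ _ hp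
    · exact Relation.ReflTransGen.mono (fun x y h =>
        (CADMG.fixList_bi σ₁ G x y).mpr
          ⟨h.1, fun hc => hσ₁F' x hc h.2.1, fun hc => hσ₁F' y hc h.2.2⟩) _ _ (hbcF'.2 w hwF' r (hRF' hr))
  · rintro ⟨D, ⟨v, hvrnd, hDdef⟩, hnint⟩
    have hvW : v ∈ W := hvrnd.2
    have hvD : v ∈ D := by rw [hDdef]; exact Relation.ReflTransGen.refl
    have hDW : D ⊆ W := by
      rw [hDdef]
      intro w hw
      exact CADMG.last_mem_of_path (r := (G.induce W).bi) (fun x y h => h.2.2) hw hvW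
    have hdec : ∀ x, x ∈ D →
        Relation.ReflTransGen (fun p q => G.bi p q ∧ p ∈ D ∧ q ∈ D) v x := by
      intro x hx
      rw [hDdef] at hx
      simp only [Set.mem_setOf_eq] at hx
      induction hx with
      | refl => exact Relation.ReflTransGen.refl
      | tail hp he ih =>
        exact ih.tail ⟨he.1, by rw [hDdef]; exact hp, by rw [hDdef]; exact hp.tail he⟩
    have hsymD : Symmetric (fun p q => G.bi p q ∧ p ∈ D ∧ q ∈ D) :=
      fun p q h => ⟨G.bi_symm p q h.1, h.2.2, h.2.1⟩
    have hbcD : G.BiConnected D :=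
      ⟨⟨v, hvD⟩, fun a ha b hb =>
        (show Relation.ReflTransGen (fun p q => G.bi p q ∧ p ∈ D ∧ q ∈ D) a v by haveI : Std.Symm (fun p q => G.bi p q ∧ p ∈ D ∧ q ∈ D) := ⟨fun _ _ h => hsymD h⟩; exact Std.Symm.symm _ _ (hdec a ha)).trans (hdec b hb)⟩
    have hnreach : ¬ G.Reachable D := fun h => hnint ⟨h, hbcD⟩
    rcases CADMG.key D G.rnd.ncard G le_rfl
        (by rw [hG]; exact fun d _ => Set.mem_univ d) hbcD with
      ⟨F', hss, hbcF', hanc⟩ | hr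
    · have hDA : D ∩ A = ∅ := by
        ext x
        simp only [Set.mem_inter_iff, Set.mem_empty_iff_false, iff_false, not_and]
        exact fun hxD hxA => hWA x hxA (hDW hxD)
      set E : V → V → Prop := fun p q => G.dir p q ∧ p ∈ D ∧ q ∈ D with hEdef
      set Rt : Set V := {d | d ∈ D ∧ ∀ d', Relation.ReflTransGen E d d' → d' = d} with hRtdef
      have hreach : ∀ f ∈ D, ∃ r ∈ Rt, Relation.ReflTransGen E f r := by
        intro f hf
        obtain ⟨r, hr, hmax⟩ := CADMG.exists_max_rel G E (fun a b h => h.1)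
          {u | Relation.ReflTransGen E f u} ⟨f, Relation.ReflTransGen.refl⟩
        have hrU : Relation.ReflTransGen E f r := hr
        have hrD : r ∈ D := by
          rcases Relation.reflTransGen_iff_eq_or_transGen.mp hrU with h | h
          · rw [h]; exact hf
          · clear hmax
            induction h with
            | single h' => exact h'.2.2
            | tail _ h' _ => exact h'.2.2
        exact ⟨r, ⟨hrD, fun d' hp => hmax d' (hrU.trans hp) hp⟩, hrU⟩
      have hDforest : G.CForest Rt D :=
        ⟨fun r hr => hr.1, hbcD, E, fun a b h => h, hreach⟩
      have hF'forest : G.CForest Rt F' := by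
        refine ⟨fun r hr => hss.subset hr.1, hbcF',
          fun p q => G.dir p q ∧ p ∈ F' ∧ q ∈ F', fun a b h => h, fun f hf => ?_⟩
        obtain ⟨d, hd, hp⟩ := hanc f hf
        obtain ⟨r, hr, hp2⟩ := hreach d hd
        exact ⟨r, hr, hp.trans (Relation.ReflTransGen.mono (fun x y h =>
          ⟨h.1, hss.subset h.2.1, hss.subset h.2.2⟩) _ _ hp2)⟩
      have hne : (A ∩ (F' \ D)).Nonempty := by
        by_contra hcon
        rw [Set.not_nonempty_iff_eq_empty] at hcon
        have hF'A : ∀ x ∈ F', x ∉ A := by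
          intro x hxF hxA
          by_cases hxD : x ∈ D
          · exact (hWA x hxA) (hDW hxD)
          · exact absurd (show x ∈ A ∩ (F' \ D) from ⟨hxA, hxF, hxD⟩)
              (by rw [hcon]; exact Set.notMem_empty x)
        have hF'W : F' ⊆ W := by
          intro f hf
          obtain ⟨d, hd, hp⟩ := hanc f hf
          obtain ⟨y, hy, hp2⟩ := hDW hd
          exact ⟨y, hy, (Relation.ReflTransGen.mono (fun x y' h =>
            ⟨h.1, hF'A x h.2.1, hF'A y' h.2.2⟩) _ _ hp).trans hp2⟩
        have hsub : F' ⊆ D := by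
          intro f hf
          rw [hDdef]
          exact Relation.ReflTransGen.mono (fun x y h =>
            ⟨h.1, hF'W h.2.1, hF'W h.2.2⟩) _ _ (hbcF'.2 v (hss.subset hvD) f hf)
        exact (Set.ssubset_iff_subset_ne.mp hss).2
          (Set.Subset.antisymm hss.subset hsub)
      exact ⟨Rt, D, F', hDforest, hF'forest, hss, hDA, hne, fun r hr => hDW hr.1⟩
    · exact absurd hr hnreach
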